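/- Let δ > 0, let Δ₀ be a real number with |Δ₀| < δ, let V₁, V₂, … be independent real random variables each uniformly distributed on [−δ, δ], and define recursively Δⱼ = Δⱼ₋₁ − Vⱼ for j ≥ 1. Then for every integer k ≥ 1, the probability of the event ⋂_{j=1}^{k} {|Vⱼ| + |Δⱼ| < δ} equals 2^{−k}. Equivalently, starting from a forced move, the run of consecutive forced moves in a dimension has length at least k with probability 2^{−(k−1)}. -/

import Mathlib

open MeasureTheory ProbabilityTheory

/-- The uniform probability measure on the interval `[a, b]`. -/
noncomputable def uniformIcc (a b : ℝ) : Measure ℝ :=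
  (ENNReal.ofReal (b - a))⁻¹ • volume.restrict (Set.Icc a b)

lemma uniformIcc_half {δ : ℝ} (hδ : 0 < δ) {x : ℝ} (hx : |x| < δ) :
    uniformIcc (-δ) δ {v | |v| + |x - v| < δ} = 2⁻¹ := by
  obtain ⟨hx1, hx2⟩ := abs_lt.1 hx
  have hset : {v : ℝ | |v| + |x - v| < δ} = Set.Ioo ((x - δ)/2) ((x + δ)/2) := by
    ext v
    simp only [Set.mem_setOf_eq, Set.mem_Ioo]
    constructor
    · intro h
      constructor <;>
        rcases abs_cases v with ⟨h1, h2⟩ | ⟨h1, h2⟩ <;>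
        rcases abs_cases (x - v) with ⟨h3, h4⟩ | ⟨h3, h4⟩ <;> linarith
    · rintro ⟨ha, hb⟩
      rcases abs_cases v with ⟨h1, h2⟩ | ⟨h1, h2⟩ <;>
        rcases abs_cases (x - v) with ⟨h3, h4⟩ | ⟨h3, h4⟩ <;> linarith
  have hsub : Set.Ioo ((x - δ)/2) ((x + δ)/2) ⊆ Set.Icc (-δ) δ := by
    rintro v ⟨h1, h2⟩
    constructor <;> [linarith; linarith]
  rw [hset, uniformIcc, Measure.smul_apply,
    Measure.restrict_apply measurableSet_Ioo, Set.inter_eq_left.mpr hsub,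
    Real.volume_Ioo]
  have h1 : (x + δ)/2 - (x - δ)/2 = δ := by ring
  have h2 : δ - -δ = 2 * δ := by ring
  rw [h1, h2, ENNReal.ofReal_mul (by norm_num), smul_eq_mul,
    ENNReal.mul_inv (Or.inl (by simp)) (Or.inl (by simp)), mul_assoc,
    ENNReal.inv_mul_cancel (ENNReal.ofReal_pos.mpr hδ).ne' ENNReal.ofReal_ne_top,
    mul_one, ENNReal.ofReal_ofNat]

instance uniformIcc_sfinite (a b : ℝ) : SFinite (uniformIcc a b) := by
  unfold uniformIcc; infer_instance

lemma uniformIcc_set_measurable {δ x : ℝ} :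
    MeasurableSet {v : ℝ | |v| + |x - v| < δ} :=
  measurableSet_lt (measurable_id.abs.add ((measurable_const.sub measurable_id).abs))
    measurable_const


lemma event_measurableSet {Ω : Type*} [m : MeasurableSpace Ω] {δ : ℝ} (V Δ : ℕ → Ω → ℝ) (n : ℕ)
    (hV : ∀ j, 1 ≤ j → j ≤ n → Measurable (V j))
    (hΔ : ∀ j, 1 ≤ j → j ≤ n → Measurable (Δ j)) :
    MeasurableSet {ω | ∀ j, 1 ≤ j → j ≤ n → |V j ω| + |Δ j ω| < δ} := by
  have : {ω | ∀ j, 1 ≤ j → j ≤ n → |V j ω| + |Δ j ω| < δ}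
      = ⋂ j, ⋂ (_ : 1 ≤ j), ⋂ (_ : j ≤ n), {ω | |V j ω| + |Δ j ω| < δ} := by
    ext ω; simp
  rw [this]
  exact MeasurableSet.iInter fun j => MeasurableSet.iInter fun hj1 =>
    MeasurableSet.iInter fun hjn =>
      measurableSet_lt ((hV j hj1 hjn).abs.add ((hΔ j hj1 hjn).abs)) measurable_const

lemma pair_indicator_measurable {Ω : Type*} [m : MeasurableSpace Ω] (A : Set Ω)
    (hA : MeasurableSet A) (f : Ω → ℝ) (hf : Measurable f) :
    Measurable (fun ω => (A.indicator (fun _ => (1 : ℝ)) ω, f ω)) :=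
  (measurable_const.indicator hA).prodMk hf

/-- Let `|Δ₀| < δ`, let `V₁, V₂, …` be i.i.d. uniform on `[-δ, δ]`, and let
`Δⱼ = Δⱼ₋₁ - Vⱼ` for `j ≥ 1`. Then for every `k ≥ 1`, the probability of the event
`⋂_{j=1}^{k} {|Vⱼ| + |Δⱼ| < δ}` equals `2⁻ᵏ`. -/
theorem stmt1 {Ω : Type*} [MeasurableSpace Ω] (P : Measure Ω) [IsProbabilityMeasure P]
    (δ Δ₀ : ℝ) (hδ : 0 < δ) (hΔ₀ : |Δ₀| < δ)
    (V : ℕ → Ω → ℝ) (hVmeas : ∀ j, Measurable (V j))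
    (hindep : iIndepFun V P)
    (hVunif : ∀ j, Measure.map (V j) P = uniformIcc (-δ) δ)
    (Δ : ℕ → Ω → ℝ) (hΔ0 : Δ 0 = fun _ => Δ₀)
    (hrec : ∀ j, Δ (j + 1) = fun ω => Δ j ω - V (j + 1) ω)
    (k : ℕ) (hk : 1 ≤ k) :
    P {ω | ∀ j, 1 ≤ j → j ≤ k → |V j ω| + |Δ j ω| < δ} = 2⁻¹ ^ k := by
  have hΔmeas : ∀ j, Measurable (Δ j) := by
    intro j
    induction j with
    | zero => rw [hΔ0]; exact measurable_const
    | succ n ih => rw [hrec]; exact ih.sub (hVmeas (n + 1))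
  set A : ℕ → Set Ω := fun m => {ω | ∀ j, 1 ≤ j → j ≤ m → |V j ω| + |Δ j ω| < δ} with hA
  have hAmeas : ∀ m, MeasurableSet (A m) := fun m =>
    event_measurableSet V Δ m (fun j _ _ => hVmeas j) (fun j _ _ => hΔmeas j)
  induction k, hk using Nat.le_induction with
  | base =>
    have hΔ1 : ∀ ω, Δ 1 ω = Δ₀ - V 1 ω := by
      intro ω; rw [hrec 0]; simp [hΔ0]
    have hset : A 1 = V 1 ⁻¹' {v | |v| + |Δ₀ - v| < δ} := by
      ext ω
      simp only [hA, Set.mem_setOf_eq, Set.mem_preimage]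
      constructor
      · intro h
        have := h 1 le_rfl le_rfl
        rwa [hΔ1] at this
      · intro h j hj1 hj2
        have hj : j = 1 := le_antisymm hj2 hj1
        subst hj
        rwa [hΔ1]
      -- end
    show P (A 1) = 2⁻¹ ^ 1
    rw [hset, ← Measure.map_apply (hVmeas 1) uniformIcc_set_measurable, hVunif 1,
      uniformIcc_half hδ hΔ₀, pow_one]
  | succ n hn IH =>
    -- setup
    set χ : Ω → ℝ := (A n).indicator (fun _ => (1 : ℝ)) with hχ
    set W : Ω → ℝ × ℝ := fun ω => (χ ω, Δ n ω) with hW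
    have hχmeas : Measurable χ := measurable_const.indicator (hAmeas n)
    have hWmeas : Measurable W := hχmeas.prodMk (hΔmeas n)
    -- independence of W and V (n+1)
    have hconstS : ∀ (c : ℝ),
        Measurable[⨆ i ∈ Set.Iic n, MeasurableSpace.comap (V i) inferInstance]
          (fun _ : Ω => c) := fun c =>
      @measurable_const ℝ Ω _ (⨆ i ∈ Set.Iic n, MeasurableSpace.comap (V i) inferInstance) c
    have hVmS : ∀ i, i ≤ n →
        Measurable[⨆ i ∈ Set.Iic n, MeasurableSpace.comap (V i) inferInstance] (V i) := by
      intro i hi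
      rw [measurable_iff_comap_le]
      exact le_iSup₂ (f := fun i (_ : i ∈ Set.Iic n) => MeasurableSpace.comap (V i) inferInstance)
        i hi
    have hΔmS : ∀ j, j ≤ n → Measurable[⨆ i ∈ Set.Iic n, MeasurableSpace.comap (V i) inferInstance] (Δ j) := by
      intro j
      induction j with
      | zero => intro _; rw [hΔ0]; exact hconstS Δ₀
      | succ m ih =>
        intro hm
        rw [hrec]
        exact (ih (Nat.le_of_succ_le hm)).sub (hVmS (m + 1) hm)
    have hAmS : MeasurableSet[⨆ i ∈ Set.Iic n, MeasurableSpace.comap (V i) inferInstance] (A n) :=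
      @event_measurableSet Ω (⨆ i ∈ Set.Iic n, MeasurableSpace.comap (V i) inferInstance) δ V Δ n
        (fun j _ hjn => hVmS j hjn) (fun j _ hjn => hΔmS j hjn)
    have hWmS : Measurable[⨆ i ∈ Set.Iic n, MeasurableSpace.comap (V i) inferInstance] W :=
      @pair_indicator_measurable Ω (⨆ i ∈ Set.Iic n, MeasurableSpace.comap (V i) inferInstance)
        (A n) hAmS (Δ n) (hΔmS n le_rfl)
    have hIndep : IndepFun W (V (n + 1)) P := by
      have h1 : Indep (⨆ i ∈ Set.Iic n, MeasurableSpace.comap (V i) inferInstance)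
          (⨆ i ∈ ({n + 1} : Set ℕ), MeasurableSpace.comap (V i) inferInstance) P := by
        refine indep_iSup_of_disjoint (fun i => (hVmeas i).comap_le) hindep.iIndep ?_
        simp only [Set.disjoint_left, Set.mem_Iic, Set.mem_singleton_iff]
        intro a ha
        omega
      rw [IndepFun_iff_Indep]
      refine indep_of_indep_of_le_right (indep_of_indep_of_le_left h1 ?_) ?_
      · rw [← measurable_iff_comap_le]; exact hWmS
      · exact le_iSup₂
          (f := fun i (_ : i ∈ ({n + 1} : Set ℕ)) => MeasurableSpace.comap (V i) inferInstance)
          (n + 1) rfl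
    -- the joint event
    set S : Set ((ℝ × ℝ) × ℝ) := {p | p.1.1 = 1 ∧ |p.2| + |p.1.2 - p.2| < δ} with hS
    have hSmeas : MeasurableSet S := by
      refine MeasurableSet.inter ?_ ?_
      · exact (measurable_fst.comp measurable_fst) (measurableSet_singleton 1)
      · exact measurableSet_lt
          (measurable_snd.abs.add (((measurable_snd.comp measurable_fst).sub measurable_snd).abs))
          measurable_const
    have hevent : A (n + 1) = (fun ω => (W ω, V (n + 1) ω)) ⁻¹' S := by
      ext ω
      have hχone : χ ω = 1 ↔ ω ∈ A n := by
        by_cases h : ω ∈ A n <;> simp [hχ, h]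
      simp only [hA, Set.mem_setOf_eq, Set.mem_preimage, hS, hW]
      constructor
      · intro h
        have hAn : ω ∈ A n := fun j hj1 hj2 => h j hj1 (hj2.trans (Nat.le_succ n))
        refine ⟨hχone.mpr hAn, ?_⟩
        have := h (n + 1) (Nat.succ_le_succ (Nat.zero_le n)) le_rfl
        rwa [hrec n] at this
      · rintro ⟨h1, h2⟩ j hj1 hj2
        have hAn : ω ∈ A n := hχone.mp h1
        rcases Nat.lt_succ_iff_lt_or_eq.mp (Nat.lt_succ_of_le hj2) with h | h
        · exact hAn j hj1 (Nat.lt_succ_iff.mp h)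
        · subst h; rw [hrec n]; exact h2
    -- compute
    have hmap : P.map (fun ω => (W ω, V (n + 1) ω)) = (P.map W).prod (P.map (V (n + 1))) :=
      (indepFun_iff_map_prod_eq_prod_map_map hWmeas.aemeasurable
        (hVmeas (n + 1)).aemeasurable).mp hIndep
    have hpoint : ∀ ω, uniformIcc (-δ) δ (Prod.mk (W ω) ⁻¹' S)
        = (A n).indicator (fun _ => (2⁻¹ : ENNReal)) ω := by
      intro ω
      by_cases h : ω ∈ A n
      · have hslice : Prod.mk (W ω) ⁻¹' S = {v | |v| + |Δ n ω - v| < δ} := by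
          ext v
          simp only [hS, Set.mem_preimage, Set.mem_setOf_eq, hW]
          have : χ ω = 1 := by simp [hχ, h]
          simp [this]
        have hΔlt : |Δ n ω| < δ := by
          have := h n hn le_rfl
          have := abs_nonneg (V n ω)
          linarith
        rw [hslice, uniformIcc_half hδ hΔlt, Set.indicator_of_mem h]
      · have hslice : Prod.mk (W ω) ⁻¹' S = ∅ := by
          ext v
          simp only [hS, Set.mem_preimage, Set.mem_setOf_eq, Set.mem_empty_iff_false, hW]
          have : χ ω = 0 := by simp [hχ, h]
          simp [this]
        rw [hslice, measure_empty, Set.indicator_of_notMem h]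
    calc P (A (n + 1))
        = P.map (fun ω => (W ω, V (n + 1) ω)) S := by
          rw [hevent, Measure.map_apply (hWmeas.prodMk (hVmeas (n + 1))) hSmeas]
      _ = (P.map W).prod (P.map (V (n + 1))) S := by rw [hmap]
      _ = ∫⁻ w, uniformIcc (-δ) δ (Prod.mk w ⁻¹' S) ∂(P.map W) := by
          rw [hVunif (n + 1), Measure.prod_apply hSmeas]
      _ = ∫⁻ ω, uniformIcc (-δ) δ (Prod.mk (W ω) ⁻¹' S) ∂P :=
          lintegral_map (measurable_measure_prodMk_left hSmeas) hWmeas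
      _ = ∫⁻ ω, (A n).indicator (fun _ => (2⁻¹ : ENNReal)) ω ∂P := by
          simp_rw [hpoint]
      _ = 2⁻¹ * P (A n) := by
          rw [lintegral_indicator (hAmeas n), setLIntegral_const]
      _ = 2⁻¹ ^ (n + 1) := by rw [IH, pow_succ, mul_comm]
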